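/- Let m ∈ ℝ, σ > 0, s > 0, t > 0 and x > y be real numbers. Then ∫_y^∞ f̂(x,y,z̃,t)·(1 − π(s, z̃ − y)) dz̃ = 1 − π(t+s, x − y); that is, the killed transition density f̂ and the survival function 1 − π satisfy the Chapman–Kolmogorov relation used in the proof of the lemma on the joint probability γ. -/

import Mathlib

open MeasureTheory Real Set

/-- The standard normal density. -/
noncomputable def phi (x : ℝ) : ℝ := (Real.sqrt (2 * Real.pi))⁻¹ * Real.exp (-x ^ 2 / 2)

/-- The standard normal cumulative distribution function. -/
noncomputable def Phi (x : ℝ) : ℝ := ∫ u in Set.Iio x, phi u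

/-- The first-passage probability `π(t,x)`. -/
noncomputable def piF (m σ t x : ℝ) : ℝ :=
  1 - Phi ((x + m * t) / (σ * Real.sqrt t)) +
    Real.exp (-2 * m * x / σ ^ 2) * Phi ((-x + m * t) / (σ * Real.sqrt t))

/-- The killed transition density `f̂(x,y,z̃,t)`. -/
noncomputable def fhat (m σ x y z t : ℝ) : ℝ :=
  (1 / (σ * Real.sqrt t)) * Real.exp (-m * (x - z) / σ ^ 2 - m ^ 2 * t / (2 * σ ^ 2)) *
    (phi ((x - z) / (σ * Real.sqrt t)) - phi ((-x - z + 2 * y) / (σ * Real.sqrt t)))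

namespace Stmt9Aux

/-- Gaussian kernel with standard deviation `c` and mean `μ`. -/
noncomputable def gK (c μ u : ℝ) : ℝ := c⁻¹ * phi ((u - μ) / c)

lemma phi_nonneg (x : ℝ) : 0 ≤ phi x := by
  unfold phi; positivity

lemma phi_eq_of_sq_eq {q r : ℝ} (h : q ^ 2 = r ^ 2) : phi q = phi r := by
  unfold phi; rw [h]

lemma phi_neg (x : ℝ) : phi (-x) = phi x := phi_eq_of_sq_eq (by ring)

lemma exp_mul_phi {p q r : ℝ} (h : q ^ 2 = r ^ 2 - 2 * p) :
    Real.exp p * phi r = phi q := by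
  unfold phi
  rw [← mul_assoc, mul_comm (Real.exp p), mul_assoc, ← Real.exp_add]
  congr 1
  rw [h]; ring

lemma phi_mul_phi {q1 q2 r1 r2 : ℝ} (h : q1 ^ 2 + q2 ^ 2 = r1 ^ 2 + r2 ^ 2) :
    phi q1 * phi q2 = phi r1 * phi r2 := by
  unfold phi
  rw [mul_mul_mul_comm, ← Real.exp_add, mul_mul_mul_comm, ← Real.exp_add]
  congr 2
  linarith

lemma phi_anti {q r : ℝ} (h : q ^ 2 ≤ r ^ 2) : phi r ≤ phi q := by
  unfold phi
  have : Real.exp (-r ^ 2 / 2) ≤ Real.exp (-q ^ 2 / 2) := by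
    apply Real.exp_le_exp.2; linarith
  have h0 : (0:ℝ) ≤ (Real.sqrt (2 * Real.pi))⁻¹ := by positivity
  exact mul_le_mul_of_nonneg_left this h0

lemma integrable_phi : Integrable phi := by
  have h : Integrable (fun x : ℝ => Real.exp (-(2⁻¹ : ℝ) * x ^ 2)) :=
    integrable_exp_neg_mul_sq (by norm_num)
  have h2 : phi = fun x : ℝ => (Real.sqrt (2 * Real.pi))⁻¹ * Real.exp (-(2⁻¹ : ℝ) * x ^ 2) := by
    funext x; unfold phi; congr 1; ring
  rw [h2]
  exact h.const_mul _

lemma integral_phi : ∫ x, phi x = 1 := by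
  unfold phi
  rw [integral_const_mul]
  simp_rw [show ∀ x : ℝ, -x ^ 2 / 2 = -(2⁻¹ : ℝ) * x ^ 2 from fun x => by ring]
  rw [integral_gaussian, show Real.pi / 2⁻¹ = 2 * Real.pi by ring]
  exact inv_mul_cancel₀ (ne_of_gt (Real.sqrt_pos.2 (by positivity)))

lemma integrable_gK {c : ℝ} (hc : 0 < c) (μ : ℝ) : Integrable (gK c μ) := by
  have h1 : Integrable (fun x : ℝ => phi (x / c)) := integrable_phi.comp_div hc.ne'
  have h2 : Integrable (fun x : ℝ => phi ((x - μ) / c)) := h1.comp_sub_right μ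
  exact h2.const_mul _

lemma gK_nonneg {c : ℝ} (μ u : ℝ) (hc : 0 < c) : 0 ≤ gK c μ u := by
  unfold gK
  exact mul_nonneg (by positivity) (phi_nonneg _)

lemma setIntegral_Ioi_comp_add (f : ℝ → ℝ) (a c : ℝ) :
    ∫ x in Ioi a, f (x + c) = ∫ x in Ioi (a + c), f x := by
  have A : MeasurableEmbedding fun x : ℝ => x + c :=
    (Homeomorph.addRight c).isClosedEmbedding.measurableEmbedding
  have B := A.setIntegral_map (μ := volume) f (Ioi (a + c))
  rw [map_add_right_eq_self volume c] at B
  rw [B, preimage_add_const_Ioi]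
  norm_num

lemma integral_phi_Ioi (b : ℝ) : ∫ x in Ioi b, phi x = Phi (-b) := by
  have h := integral_comp_neg_Ioi b phi
  simp_rw [phi_neg] at h
  rw [h, integral_Iic_eq_integral_Iio]
  rfl

lemma Phi_neg (x : ℝ) : Phi (-x) = 1 - Phi x := by
  have h1 : Phi x + Phi (-x) = 1 := by
    rw [← integral_phi_Ioi x, Phi, ← integral_Iic_eq_integral_Iio,
      intervalIntegral.integral_Iic_add_Ioi integrable_phi.integrableOn
        integrable_phi.integrableOn, integral_phi]
  linarith

lemma Phi_nonneg (x : ℝ) : 0 ≤ Phi x :=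
  setIntegral_nonneg measurableSet_Iio fun u _ => phi_nonneg u

lemma Phi_le_one (x : ℝ) : Phi x ≤ 1 := by
  rw [← integral_phi]
  exact setIntegral_le_integral integrable_phi (Filter.Eventually.of_forall phi_nonneg)

lemma integral_gK_Ioi {c : ℝ} (hc : 0 < c) (μ : ℝ) :
    ∫ u in Ioi (0 : ℝ), gK c μ u = Phi (μ / c) := by
  unfold gK
  rw [integral_const_mul]
  have h1 : ∫ u in Ioi (0 : ℝ), phi ((u - μ) / c) = ∫ u in Ioi (0 + -μ), phi (u / c) := by
    rw [← setIntegral_Ioi_comp_add (fun u => phi (u / c)) 0 (-μ)]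
    simp_rw [sub_eq_add_neg]
  rw [h1]
  simp_rw [show ∀ u : ℝ, u / c = c⁻¹ * u from fun u => by ring]
  rw [integral_comp_mul_left_Ioi phi _ (inv_pos.2 hc), integral_phi_Ioi]
  rw [smul_eq_mul, inv_inv, ← mul_assoc, inv_mul_cancel₀ hc.ne', one_mul]
  congr 1
  field_simp
  ring

lemma gK_mul {a c : ℝ} (ha : 0 < a) (hc : 0 < c) (A C w : ℝ) :
    gK a A w * gK c C w =
      (Real.sqrt (a ^ 2 + c ^ 2))⁻¹ * phi ((C - A) / Real.sqrt (a ^ 2 + c ^ 2)) *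
        gK (a * c / Real.sqrt (a ^ 2 + c ^ 2)) ((A * c ^ 2 + C * a ^ 2) / (a ^ 2 + c ^ 2)) w := by
  have hd0 : (0 : ℝ) < Real.sqrt (a ^ 2 + c ^ 2) := Real.sqrt_pos.2 (by positivity)
  have hd2 : Real.sqrt (a ^ 2 + c ^ 2) ^ 2 = a ^ 2 + c ^ 2 := Real.sq_sqrt (by positivity)
  unfold gK
  have hphi : phi ((w - A) / a) * phi ((w - C) / c) =
      phi ((C - A) / Real.sqrt (a ^ 2 + c ^ 2)) *
        phi ((w - (A * c ^ 2 + C * a ^ 2) / (a ^ 2 + c ^ 2)) /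
          (a * c / Real.sqrt (a ^ 2 + c ^ 2))) := by
    apply phi_mul_phi
    rw [div_pow, div_pow, div_pow, div_pow, div_pow, mul_pow, hd2]
    field_simp
    ring
  rw [mul_mul_mul_comm, hphi,
    show a⁻¹ * c⁻¹ = (Real.sqrt (a ^ 2 + c ^ 2))⁻¹ *
      (a * c / Real.sqrt (a ^ 2 + c ^ 2))⁻¹ by field_simp,
    mul_mul_mul_comm]

lemma integral_gK_mul_Ioi {a c : ℝ} (ha : 0 < a) (hc : 0 < c) (A C : ℝ) :
    ∫ w in Ioi (0 : ℝ), gK a A w * gK c C w =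
      (Real.sqrt (a ^ 2 + c ^ 2))⁻¹ * phi ((C - A) / Real.sqrt (a ^ 2 + c ^ 2)) *
        Phi ((A * c ^ 2 + C * a ^ 2) / (a ^ 2 + c ^ 2) /
          (a * c / Real.sqrt (a ^ 2 + c ^ 2))) := by
  have hd0 : (0 : ℝ) < Real.sqrt (a ^ 2 + c ^ 2) := Real.sqrt_pos.2 (by positivity)
  have he : (0 : ℝ) < a * c / Real.sqrt (a ^ 2 + c ^ 2) := by positivity
  simp_rw [gK_mul ha hc]
  rw [integral_const_mul, integral_gK_Ioi he]

lemma integrableOn_gK_mul {a c : ℝ} (ha : 0 < a) (hc : 0 < c) (A C : ℝ) :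
    IntegrableOn (fun w => gK a A w * gK c C w) (Ioi (0 : ℝ)) := by
  have he : (0 : ℝ) < a * c / Real.sqrt (a ^ 2 + c ^ 2) := by
    have : (0 : ℝ) < Real.sqrt (a ^ 2 + c ^ 2) := Real.sqrt_pos.2 (by positivity)
    positivity
  simp_rw [gK_mul ha hc]
  exact ((integrable_gK he _).const_mul _).integrableOn

/-- Decomposition of `fhat` as a difference of Gaussian kernels, in the last spatial variable. -/
lemma fhat_decomp1 (m σ p w u : ℝ) (hσ : 0 < σ) (hu : 0 < u) :
    fhat m σ p 0 w u = gK (σ * Real.sqrt u) (p + m * u) w -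
      Real.exp (-2 * m * p / σ ^ 2) * gK (σ * Real.sqrt u) (m * u - p) w := by
  have ha : 0 < σ * Real.sqrt u := by positivity
  have ha2 : (σ * Real.sqrt u) ^ 2 = σ ^ 2 * u := by
    rw [mul_pow, Real.sq_sqrt hu.le]
  have h1 : Real.exp (-m * (p - w) / σ ^ 2 - m ^ 2 * u / (2 * σ ^ 2)) * phi ((p - w) / (σ * Real.sqrt u))
      = phi ((w - (p + m * u)) / (σ * Real.sqrt u)) := by
    apply exp_mul_phi
    rw [div_pow, div_pow, ha2]
    field_simp
    ring
  have h2 : Real.exp (-m * (p - w) / σ ^ 2 - m ^ 2 * u / (2 * σ ^ 2)) *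
      phi ((-p - w + 2 * 0) / (σ * Real.sqrt u))
      = Real.exp (-2 * m * p / σ ^ 2) * phi ((w - (m * u - p)) / (σ * Real.sqrt u)) := by
    have h3 : Real.exp (-m * (p - w) / σ ^ 2 - m ^ 2 * u / (2 * σ ^ 2) + 2 * m * p / σ ^ 2) *
        phi ((-p - w + 2 * 0) / (σ * Real.sqrt u))
        = phi ((w - (m * u - p)) / (σ * Real.sqrt u)) := by
      apply exp_mul_phi
      rw [div_pow, div_pow, ha2]
      field_simp
      ring
    calc Real.exp (-m * (p - w) / σ ^ 2 - m ^ 2 * u / (2 * σ ^ 2)) *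
          phi ((-p - w + 2 * 0) / (σ * Real.sqrt u))
        = Real.exp (-2 * m * p / σ ^ 2) *
          (Real.exp (-m * (p - w) / σ ^ 2 - m ^ 2 * u / (2 * σ ^ 2) + 2 * m * p / σ ^ 2) *
            phi ((-p - w + 2 * 0) / (σ * Real.sqrt u))) := by
          rw [← mul_assoc, ← Real.exp_add]; congr 2; ring
      _ = Real.exp (-2 * m * p / σ ^ 2) * phi ((w - (m * u - p)) / (σ * Real.sqrt u)) := by
          rw [h3]
  unfold fhat gK
  rw [show (1 : ℝ) / (σ * Real.sqrt u) = (σ * Real.sqrt u)⁻¹ by rw [one_div]]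
  linear_combination (σ * Real.sqrt u)⁻¹ * h1 - (σ * Real.sqrt u)⁻¹ * h2

/-- Decomposition of `fhat` as a difference of Gaussian kernels, in the first spatial variable. -/
lemma fhat_decomp2 (m σ w v s : ℝ) (hσ : 0 < σ) (hs : 0 < s) :
    fhat m σ w 0 v s = gK (σ * Real.sqrt s) (v - m * s) w -
      Real.exp (2 * m * v / σ ^ 2) * gK (σ * Real.sqrt s) (-v - m * s) w := by
  have ha : 0 < σ * Real.sqrt s := by positivity
  have ha2 : (σ * Real.sqrt s) ^ 2 = σ ^ 2 * s := by
    rw [mul_pow, Real.sq_sqrt hs.le]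
  have h1 : Real.exp (-m * (w - v) / σ ^ 2 - m ^ 2 * s / (2 * σ ^ 2)) *
      phi ((w - v) / (σ * Real.sqrt s))
      = phi ((w - (v - m * s)) / (σ * Real.sqrt s)) := by
    apply exp_mul_phi
    rw [div_pow, div_pow, ha2]
    field_simp
    ring
  have h2 : Real.exp (-m * (w - v) / σ ^ 2 - m ^ 2 * s / (2 * σ ^ 2)) *
      phi ((-w - v + 2 * 0) / (σ * Real.sqrt s))
      = Real.exp (2 * m * v / σ ^ 2) * phi ((w - (-v - m * s)) / (σ * Real.sqrt s)) := by
    have h3 : Real.exp (-m * (w - v) / σ ^ 2 - m ^ 2 * s / (2 * σ ^ 2) - 2 * m * v / σ ^ 2) *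
        phi ((-w - v + 2 * 0) / (σ * Real.sqrt s))
        = phi ((w - (-v - m * s)) / (σ * Real.sqrt s)) := by
      apply exp_mul_phi
      rw [div_pow, div_pow, ha2]
      field_simp
      ring
    calc Real.exp (-m * (w - v) / σ ^ 2 - m ^ 2 * s / (2 * σ ^ 2)) *
          phi ((-w - v + 2 * 0) / (σ * Real.sqrt s))
        = Real.exp (2 * m * v / σ ^ 2) *
          (Real.exp (-m * (w - v) / σ ^ 2 - m ^ 2 * s / (2 * σ ^ 2) - 2 * m * v / σ ^ 2) *
            phi ((-w - v + 2 * 0) / (σ * Real.sqrt s))) := by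
          rw [← mul_assoc, ← Real.exp_add]; congr 2; ring
      _ = Real.exp (2 * m * v / σ ^ 2) * phi ((w - (-v - m * s)) / (σ * Real.sqrt s)) := by
          rw [h3]
  unfold fhat gK
  rw [show (1 : ℝ) / (σ * Real.sqrt s) = (σ * Real.sqrt s)⁻¹ by rw [one_div]]
  linear_combination (σ * Real.sqrt s)⁻¹ * h1 - (σ * Real.sqrt s)⁻¹ * h2

lemma integrable_fhat_v (m σ p u : ℝ) (hσ : 0 < σ) (hu : 0 < u) :
    Integrable (fun v => fhat m σ p 0 v u) := by
  have ha : 0 < σ * Real.sqrt u := by positivity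
  have h : (fun v => fhat m σ p 0 v u) = fun v =>
      gK (σ * Real.sqrt u) (p + m * u) v -
        Real.exp (-2 * m * p / σ ^ 2) * gK (σ * Real.sqrt u) (m * u - p) v :=
    funext fun v => fhat_decomp1 m σ p v u hσ hu
  rw [h]
  exact (integrable_gK ha _).sub ((integrable_gK ha _).const_mul _)

lemma fhat_nonneg (m σ p w u : ℝ) (hσ : 0 < σ) (hu : 0 < u) (hp : 0 ≤ p) (hw : 0 ≤ w) :
    0 ≤ fhat m σ p 0 w u := by
  have ha : 0 < σ * Real.sqrt u := by positivity
  unfold fhat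
  apply mul_nonneg (by positivity)
  rw [sub_nonneg]
  apply phi_anti
  rw [div_pow, div_pow]
  apply div_le_div_of_nonneg_right ?_ (by positivity)
  nlinarith

lemma fhat_le (m σ p w u : ℝ) (hσ : 0 < σ) (hu : 0 < u) :
    fhat m σ p 0 w u ≤ gK (σ * Real.sqrt u) (p + m * u) w := by
  have ha : 0 < σ * Real.sqrt u := by positivity
  rw [fhat_decomp1 m σ p w u hσ hu]
  exact sub_le_self _ (mul_nonneg (Real.exp_pos _).le (gK_nonneg _ _ ha))

/-- Survival probability as an integral of the killed density. -/
lemma survival (m σ s p : ℝ) (hσ : 0 < σ) (hs : 0 < s) :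
    ∫ v in Ioi (0 : ℝ), fhat m σ p 0 v s = 1 - piF m σ s p := by
  have hc : 0 < σ * Real.sqrt s := by positivity
  simp_rw [fun v => fhat_decomp1 m σ p v s hσ hs]
  rw [integral_sub (integrable_gK hc _).integrableOn
    ((integrable_gK hc _).const_mul _).integrableOn,
    integral_const_mul, integral_gK_Ioi hc, integral_gK_Ioi hc]
  unfold piF
  rw [show (m * s - p) / (σ * Real.sqrt s) = (-p + m * s) / (σ * Real.sqrt s) by ring_nf]
  ring

lemma piF_nonneg (m σ s p : ℝ) : 0 ≤ piF m σ s p := by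
  unfold piF
  have h1 := Phi_le_one ((p + m * s) / (σ * Real.sqrt s))
  have h2 := Phi_nonneg ((-p + m * s) / (σ * Real.sqrt s))
  have h3 := (Real.exp_pos (-2 * m * p / σ ^ 2)).le
  nlinarith

lemma one_sub_piF_le_one (m σ s p : ℝ) : 1 - piF m σ s p ≤ 1 := by
  have := piF_nonneg m σ s p; linarith

set_option maxHeartbeats 1000000 in
/-- Pointwise Chapman–Kolmogorov identity for the killed density. -/
lemma chapman (m σ s t X v : ℝ) (hσ : 0 < σ) (hs : 0 < s) (ht : 0 < t) :
    ∫ w in Ioi (0 : ℝ), fhat m σ X 0 w t * fhat m σ w 0 v s = fhat m σ X 0 v (t + s) := by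
  set a := σ * Real.sqrt t with ha_def
  set c := σ * Real.sqrt s with hc_def
  have ha : 0 < a := by rw [ha_def]; positivity
  have hc : 0 < c := by rw [hc_def]; positivity
  have ha2 : a ^ 2 = σ ^ 2 * t := by rw [ha_def, mul_pow, Real.sq_sqrt ht.le]
  have hc2 : c ^ 2 = σ ^ 2 * s := by rw [hc_def, mul_pow, Real.sq_sqrt hs.le]
  set d := Real.sqrt (a ^ 2 + c ^ 2) with hd
  have hd0 : 0 < d := Real.sqrt_pos.2 (by positivity)
  have hd2 : d ^ 2 = σ ^ 2 * (t + s) := by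
    rw [hd, Real.sq_sqrt (by positivity), ha2, hc2]; ring
  have hdst : σ * Real.sqrt (t + s) = d := by
    rw [hd, ha2, hc2, show σ ^ 2 * t + σ ^ 2 * s = σ ^ 2 * (t + s) by ring,
      Real.sqrt_mul (sq_nonneg σ), Real.sqrt_sq hσ.le]
  have key : ∀ w, fhat m σ X 0 w t * fhat m σ w 0 v s
      = gK a (X + m * t) w * gK c (v - m * s) w
        - Real.exp (2 * m * v / σ ^ 2) * (gK a (X + m * t) w * gK c (-v - m * s) w)
        - (Real.exp (-2 * m * X / σ ^ 2) * (gK a (m * t - X) w * gK c (v - m * s) w)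
          - Real.exp (-2 * m * X / σ ^ 2) * Real.exp (2 * m * v / σ ^ 2) *
              (gK a (m * t - X) w * gK c (-v - m * s) w)) := by
    intro w
    rw [fhat_decomp1 m σ X w t hσ ht, fhat_decomp2 m σ w v s hσ hs, ← ha_def, ← hc_def]
    ring
  simp_rw [key]
  have i11 : IntegrableOn (fun w => gK a (X + m * t) w * gK c (v - m * s) w) (Ioi (0 : ℝ)) :=
    integrableOn_gK_mul ha hc _ _
  have i12 : IntegrableOn (fun w => Real.exp (2 * m * v / σ ^ 2) *
      (gK a (X + m * t) w * gK c (-v - m * s) w)) (Ioi (0 : ℝ)) :=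
    (integrableOn_gK_mul ha hc _ _).const_mul _
  have i21 : IntegrableOn (fun w => Real.exp (-2 * m * X / σ ^ 2) *
      (gK a (m * t - X) w * gK c (v - m * s) w)) (Ioi (0 : ℝ)) :=
    (integrableOn_gK_mul ha hc _ _).const_mul _
  have i22 : IntegrableOn (fun w => Real.exp (-2 * m * X / σ ^ 2) * Real.exp (2 * m * v / σ ^ 2) *
      (gK a (m * t - X) w * gK c (-v - m * s) w)) (Ioi (0 : ℝ)) :=
    (integrableOn_gK_mul ha hc _ _).const_mul _
  have iA : IntegrableOn (fun w => gK a (X + m * t) w * gK c (v - m * s) w -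
      Real.exp (2 * m * v / σ ^ 2) * (gK a (X + m * t) w * gK c (-v - m * s) w)) (Ioi (0 : ℝ)) :=
    i11.sub i12
  have iB : IntegrableOn (fun w => Real.exp (-2 * m * X / σ ^ 2) *
      (gK a (m * t - X) w * gK c (v - m * s) w) -
      Real.exp (-2 * m * X / σ ^ 2) * Real.exp (2 * m * v / σ ^ 2) *
      (gK a (m * t - X) w * gK c (-v - m * s) w)) (Ioi (0 : ℝ)) :=
    i21.sub i22
  rw [integral_sub iA iB, integral_sub i11 i12, integral_sub i21 i22,
    integral_const_mul, integral_const_mul, integral_const_mul]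
  have J1 : (∫ w in Ioi (0 : ℝ), gK a (X + m * t) w * gK c (v - m * s) w)
      = gK d (X + m * (t + s)) v *
          Phi (((X + m * t) * c ^ 2 + (v - m * s) * a ^ 2) / (a ^ 2 + c ^ 2) / (a * c / d)) := by
    rw [integral_gK_mul_Ioi ha hc, ← hd]
    unfold gK
    rw [phi_eq_of_sq_eq (show ((v - m * s - (X + m * t)) / d) ^ 2
      = ((v - (X + m * (t + s))) / d) ^ 2 by ring)]
  have J3 : (∫ w in Ioi (0 : ℝ), gK a (m * t - X) w * gK c (v - m * s) w)
      = gK d (m * (t + s) - X) v *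
          Phi (((m * t - X) * c ^ 2 + (v - m * s) * a ^ 2) / (a ^ 2 + c ^ 2) / (a * c / d)) := by
    rw [integral_gK_mul_Ioi ha hc, ← hd]
    unfold gK
    rw [phi_eq_of_sq_eq (show ((v - m * s - (m * t - X)) / d) ^ 2
      = ((v - (m * (t + s) - X)) / d) ^ 2 by ring)]
  have J2 : Real.exp (2 * m * v / σ ^ 2) *
        (∫ w in Ioi (0 : ℝ), gK a (X + m * t) w * gK c (-v - m * s) w)
      = Real.exp (-2 * m * X / σ ^ 2) * (gK d (m * (t + s) - X) v *
          (1 - Phi (((m * t - X) * c ^ 2 + (v - m * s) * a ^ 2) / (a ^ 2 + c ^ 2)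
            / (a * c / d)))) := by
    rw [integral_gK_mul_Ioi ha hc, ← hd,
      show ((X + m * t) * c ^ 2 + (-v - m * s) * a ^ 2) / (a ^ 2 + c ^ 2) / (a * c / d)
        = -(((m * t - X) * c ^ 2 + (v - m * s) * a ^ 2) / (a ^ 2 + c ^ 2) / (a * c / d)) by
          rw [ha2, hc2]; ring,
      Phi_neg]
    have hsh : Real.exp (2 * m * v / σ ^ 2) * phi ((-v - m * s - (X + m * t)) / d)
        = Real.exp (-2 * m * X / σ ^ 2) * phi ((v - (m * (t + s) - X)) / d) := by
      have h := exp_mul_phi (p := 2 * m * v / σ ^ 2 + 2 * m * X / σ ^ 2)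
        (q := (v - (m * (t + s) - X)) / d) (r := (-v - m * s - (X + m * t)) / d)
        (by rw [div_pow, div_pow, hd2]; field_simp; ring)
      rw [← h, ← mul_assoc, ← Real.exp_add,
        show -2 * m * X / σ ^ 2 + (2 * m * v / σ ^ 2 + 2 * m * X / σ ^ 2)
          = 2 * m * v / σ ^ 2 by ring]
    unfold gK
    linear_combination (d⁻¹ * (1 - Phi (((m * t - X) * c ^ 2 + (v - m * s) * a ^ 2)
      / (a ^ 2 + c ^ 2) / (a * c / d)))) * hsh
  have J4 : Real.exp (-2 * m * X / σ ^ 2) * Real.exp (2 * m * v / σ ^ 2) *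
        (∫ w in Ioi (0 : ℝ), gK a (m * t - X) w * gK c (-v - m * s) w)
      = gK d (X + m * (t + s)) v *
          (1 - Phi (((X + m * t) * c ^ 2 + (v - m * s) * a ^ 2) / (a ^ 2 + c ^ 2)
            / (a * c / d))) := by
    rw [integral_gK_mul_Ioi ha hc, ← hd,
      show ((m * t - X) * c ^ 2 + (-v - m * s) * a ^ 2) / (a ^ 2 + c ^ 2) / (a * c / d)
        = -(((X + m * t) * c ^ 2 + (v - m * s) * a ^ 2) / (a ^ 2 + c ^ 2) / (a * c / d)) by
          rw [ha2, hc2]; ring,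
      Phi_neg]
    have hsh : Real.exp (-2 * m * X / σ ^ 2) * Real.exp (2 * m * v / σ ^ 2) *
        phi ((-v - m * s - (m * t - X)) / d) = phi ((v - (X + m * (t + s))) / d) := by
      rw [← Real.exp_add]
      exact exp_mul_phi (by rw [div_pow, div_pow, hd2]; field_simp; ring)
    unfold gK
    linear_combination (d⁻¹ * (1 - Phi (((X + m * t) * c ^ 2 + (v - m * s) * a ^ 2)
      / (a ^ 2 + c ^ 2) / (a * c / d)))) * hsh
  rw [fhat_decomp1 m σ X v (t + s) hσ (by linarith), hdst]
  linear_combination J1 - J2 - Real.exp (-2 * m * X / σ ^ 2) * J3 + J4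

lemma fhat_shift (m σ x y z t : ℝ) : fhat m σ x y z t = fhat m σ (x - y) 0 (z - y) t := by
  unfold fhat
  rw [show x - z = x - y - (z - y) by ring, show -x - z + 2 * y = -(x - y) - (z - y) + 2 * 0 by
    ring]

end Stmt9Aux

open Stmt9Aux

set_option maxHeartbeats 2000000 in
/-- Let `m ∈ ℝ`, `σ > 0`, `s > 0`, `t > 0` and `x > y`. Then
`∫_y^∞ f̂(x,y,z̃,t)·(1 − π(s, z̃ − y)) dz̃ = 1 − π(t+s, x − y)` : the killed transition
density `f̂` and the survival function `1 − π` satisfy the Chapman–Kolmogorov relation. -/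
theorem stmt_9 (m σ s t x y : ℝ) (hσ : 0 < σ) (hs : 0 < s) (ht : 0 < t) (hxy : y < x) :
    (∫ z in Set.Ioi y, fhat m σ x y z t * (1 - piF m σ s (z - y)))
      = 1 - piF m σ (t + s) (x - y) := by
  have hX : 0 < x - y := sub_pos.2 hxy
  have ha : 0 < σ * Real.sqrt t := by positivity
  have hc : 0 < σ * Real.sqrt s := by positivity
  -- translate the integral to base point 0
  have hA : (∫ z in Set.Ioi y, fhat m σ x y z t * (1 - piF m σ s (z - y)))
      = ∫ w in Ioi (0 : ℝ), fhat m σ (x - y) 0 w t * (1 - piF m σ s w) := by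
    rw [show Ioi y = Ioi ((0 : ℝ) + y) by rw [zero_add],
      ← setIntegral_Ioi_comp_add (fun z => fhat m σ x y z t * (1 - piF m σ s (z - y))) 0 y]
    apply setIntegral_congr_fun measurableSet_Ioi
    intro w _
    simp only
    rw [fhat_shift m σ x y (w + y) t, add_sub_cancel_right]
  rw [hA]
  -- rewrite the survival factor as an integral
  have hB : ∀ w : ℝ, fhat m σ (x - y) 0 w t * (1 - piF m σ s w)
      = ∫ v in Ioi (0 : ℝ), fhat m σ (x - y) 0 w t * fhat m σ w 0 v s := by
    intro w
    rw [integral_const_mul, survival m σ s w hσ hs]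
  simp_rw [hB]
  -- Fubini
  have hmeas : AEStronglyMeasurable
      (fun p : ℝ × ℝ => fhat m σ (x - y) 0 p.1 t * fhat m σ p.1 0 p.2 s)
      ((volume.restrict (Ioi (0 : ℝ))).prod (volume.restrict (Ioi (0 : ℝ)))) := by
    apply Continuous.aestronglyMeasurable
    unfold fhat phi
    fun_prop
  have hint : Integrable
      (Function.uncurry fun w v : ℝ => fhat m σ (x - y) 0 w t * fhat m σ w 0 v s)
      ((volume.restrict (Ioi (0 : ℝ))).prod (volume.restrict (Ioi (0 : ℝ)))) := by
    apply (integrable_prod_iff hmeas).2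
    constructor
    · apply Filter.Eventually.of_forall
      intro w
      simp only [Function.uncurry_apply_pair]
      exact ((integrable_fhat_v m σ w s hσ hs).restrict.const_mul _)
    · simp only [Function.uncurry_apply_pair]
      apply Integrable.mono ((integrable_gK ha (x - y + m * t)).restrict
        (s := Ioi (0 : ℝ))) (by have h := hmeas.norm.integral_prod_right'; simpa using h)
      rw [ae_restrict_iff' measurableSet_Ioi]
      apply Filter.Eventually.of_forall
      intro w hw
      have hw0 : (0 : ℝ) ≤ w := le_of_lt hw
      have hnn : ∀ v ∈ Ioi (0 : ℝ), ‖fhat m σ (x - y) 0 w t * fhat m σ w 0 v s‖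
          = fhat m σ (x - y) 0 w t * fhat m σ w 0 v s := by
        intro v hv
        exact abs_of_nonneg (mul_nonneg (fhat_nonneg m σ (x - y) w t hσ ht hX.le hw0)
          (fhat_nonneg m σ w v s hσ hs hw0 (le_of_lt hv)))
      rw [Real.norm_eq_abs, abs_of_nonneg (setIntegral_nonneg measurableSet_Ioi
        (fun v hv => norm_nonneg _))]
      calc ∫ v in Ioi (0 : ℝ), ‖fhat m σ (x - y) 0 w t * fhat m σ w 0 v s‖
          = ∫ v in Ioi (0 : ℝ), fhat m σ (x - y) 0 w t * fhat m σ w 0 v s :=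
            setIntegral_congr_fun measurableSet_Ioi hnn
        _ = fhat m σ (x - y) 0 w t * (1 - piF m σ s w) := by
            rw [integral_const_mul, survival m σ s w hσ hs]
        _ ≤ gK (σ * Real.sqrt t) (x - y + m * t) w * 1 := by
            apply mul_le_mul (fhat_le m σ (x - y) w t hσ ht) (one_sub_piF_le_one m σ s w)
              ?_ (gK_nonneg _ _ ha)
            have h1 : 0 ≤ ∫ v in Ioi (0 : ℝ), fhat m σ w 0 v s :=
              setIntegral_nonneg measurableSet_Ioi
                (fun v hv => fhat_nonneg m σ w v s hσ hs hw0 (le_of_lt hv))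
            rw [survival m σ s w hσ hs] at h1
            exact h1
        _ = gK (σ * Real.sqrt t) (x - y + m * t) w := mul_one _
        _ ≤ ‖gK (σ * Real.sqrt t) (x - y + m * t) w‖ := le_abs_self _
  rw [MeasureTheory.integral_integral_swap hint]
  have hC : ∀ v : ℝ, (∫ w in Ioi (0 : ℝ), fhat m σ (x - y) 0 w t * fhat m σ w 0 v s)
      = fhat m σ (x - y) 0 v (t + s) := fun v => chapman m σ s t (x - y) v hσ hs ht
  simp_rw [hC]
  exact survival m σ (t + s) (x - y) hσ (by linarith)
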